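/- arXiv:2507.03648 — 2 statements merged into one kernel-verified Lean document; each statement's English description precedes it below -/
import Mathlib

section
/- Let α₀ > 0 be the unique positive root of α(exp(α) - 1) = 1 + exp(α). For every α > α₀, one has log((α - 1)/(α + 1)) > -α; consequently, on the feasible margin interval [-α, α] the function f_α(z) = 1 / (1 + exp(z)) + α · exp(z) / (1 + exp(z))² is strictly increasing on [-α, log((α - 1)/(α + 1))] and strictly decreasing on [log((α - 1)/(α + 1)), α]. -/
/-- The upper bound on the gradient representation's discriminative power:
`f_α(z) = 1 / (1 + exp z) + α exp z / (1 + exp z)²`. -/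
noncomputable def discPowerBound (α z : ℝ) : ℝ :=
  1 / (1 + Real.exp z) + α * Real.exp z / (1 + Real.exp z) ^ 2

lemma discPowerBound_hasDerivAt (α z : ℝ) :
    HasDerivAt (discPowerBound α)
      (Real.exp z * ((α - 1) - (α + 1) * Real.exp z) / (1 + Real.exp z) ^ 3) z := by
  have hexp := Real.exp_pos z
  have he : HasDerivAt (fun z => 1 + Real.exp z) (Real.exp z) z :=
    (Real.hasDerivAt_exp z).const_add 1
  have hne : (1 + Real.exp z) ≠ 0 := by positivity
  have h1 : HasDerivAt (fun z => 1 / (1 + Real.exp z))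
      ((0 * (1 + Real.exp z) - 1 * Real.exp z) / (1 + Real.exp z) ^ 2) z :=
    (hasDerivAt_const z 1).div he hne
  have hnum : HasDerivAt (fun z => α * Real.exp z) (α * Real.exp z) z :=
    (Real.hasDerivAt_exp z).const_mul α
  have hden : HasDerivAt (fun z => (1 + Real.exp z) ^ 2)
      (((2 : ℕ) : ℝ) * (1 + Real.exp z) ^ 1 * Real.exp z) z := he.pow 2
  have hne2 : ((1 + Real.exp z) ^ 2) ≠ 0 := by positivity
  have h2 := hnum.div hden hne2
  have h := h1.add h2
  have : discPowerBound α = fun z =>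
      1 / (1 + Real.exp z) + α * Real.exp z / (1 + Real.exp z) ^ 2 := rfl
  rw [this]
  refine h.congr_deriv ?_
  field_simp
  ring

/-- Let `α₀` be the (unique) positive root of `α (exp α - 1) = 1 + exp α`.
For every `α > α₀`, the peak `log ((α - 1) / (α + 1))` lies strictly inside the
feasible margin interval `[-α, α]`: `log ((α - 1) / (α + 1)) > -α`, and `f_α`
is strictly increasing on `[-α, log ((α - 1) / (α + 1))]` and strictly
decreasing on `[log ((α - 1) / (α + 1)), α]`. -/
theorem discPowerBound_peak_inside_feasible (α₀ : ℝ) (hα₀ : 0 < α₀)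
    (hroot : α₀ * (Real.exp α₀ - 1) = 1 + Real.exp α₀)
    (α : ℝ) (hα : α₀ < α) :
    -α < Real.log ((α - 1) / (α + 1)) ∧
    StrictMonoOn (discPowerBound α) (Set.Icc (-α) (Real.log ((α - 1) / (α + 1)))) ∧
    StrictAntiOn (discPowerBound α) (Set.Icc (Real.log ((α - 1) / (α + 1))) α) := by
  have hα₀1 : 1 < α₀ := by nlinarith [Real.exp_pos α₀]
  have hα1 : 1 < α := hα₀1.trans hα
  have hfrac : 0 < (α - 1) / (α + 1) := by
    apply div_pos <;> linarith
  -- g(a) = a(e^a - 1) - (1 + e^a) is strictly increasing on [α₀, ∞)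
  set g : ℝ → ℝ := fun a => a * (Real.exp a - 1) - (1 + Real.exp a) with hg
  have hgderiv : ∀ a : ℝ, HasDerivAt g (a * Real.exp a - 1) a := by
    intro a
    have h1 : HasDerivAt (fun a : ℝ => a * (Real.exp a - 1))
        (1 * (Real.exp a - 1) + a * Real.exp a) a :=
      (hasDerivAt_id a).mul ((Real.hasDerivAt_exp a).sub_const 1)
    have h2 : HasDerivAt (fun a : ℝ => 1 + Real.exp a) (Real.exp a) a :=
      (Real.hasDerivAt_exp a).const_add 1
    have := h1.sub h2
    refine this.congr_deriv ?_
    ring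
  have hgmono : StrictMonoOn g (Set.Ici α₀) := by
    apply strictMonoOn_of_deriv_pos (convex_Ici α₀)
    · exact (Differentiable.continuous fun a => (hgderiv a).differentiableAt).continuousOn
    · intro x hx
      rw [interior_Ici] at hx
      rw [(hgderiv x).deriv]
      have hx1 : 1 < x := hα₀1.trans hx
      have : 1 < Real.exp x := by
        rw [← Real.exp_zero]; exact Real.exp_lt_exp.mpr (by linarith)
      nlinarith
  have hgα : 0 < g α := by
    have := hgmono (Set.self_mem_Ici) (Set.mem_Ici.mpr hα.le) hα
    have h0 : g α₀ = 0 := by simp [hg]; linarith [hroot]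
    linarith [h0 ▸ this]
  have hglt : 1 + Real.exp α < α * (Real.exp α - 1) := by
    simp only [hg] at hgα; linarith
  have hexpα := Real.exp_pos α
  -- the key inequality
  have hfirst : -α < Real.log ((α - 1) / (α + 1)) := by
    rw [show -α = Real.log (Real.exp (-α)) by rw [Real.log_exp]]
    apply Real.log_lt_log (Real.exp_pos _)
    rw [lt_div_iff₀ (show (0:ℝ) < α + 1 by linarith), Real.exp_neg,
      inv_mul_lt_iff₀ hexpα]
    nlinarith
  refine ⟨hfirst, ?_, ?_⟩
  · apply strictMonoOn_of_deriv_pos (convex_Icc _ _)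
    · exact (Differentiable.continuous fun z =>
        (discPowerBound_hasDerivAt α z).differentiableAt).continuousOn
    · intro x hx
      rw [interior_Icc] at hx
      rw [(discPowerBound_hasDerivAt α x).deriv]
      have hexpx := Real.exp_pos x
      have hlt : Real.exp x < (α - 1) / (α + 1) := by
        calc Real.exp x < Real.exp (Real.log ((α - 1) / (α + 1))) :=
              Real.exp_lt_exp.mpr hx.2
          _ = (α - 1) / (α + 1) := Real.exp_log hfrac
      have hnum : 0 < (α - 1) - (α + 1) * Real.exp x := by
        have h := (lt_div_iff₀ (show (0:ℝ) < α + 1 by linarith)).mp hlt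
        linarith
      exact div_pos (mul_pos hexpx hnum) (by positivity)
  · apply strictAntiOn_of_deriv_neg (convex_Icc _ _)
    · exact (Differentiable.continuous fun z =>
        (discPowerBound_hasDerivAt α z).differentiableAt).continuousOn
    · intro x hx
      rw [interior_Icc] at hx
      rw [(discPowerBound_hasDerivAt α x).deriv]
      have hexpx := Real.exp_pos x
      have hgt : (α - 1) / (α + 1) < Real.exp x := by
        calc (α - 1) / (α + 1) = Real.exp (Real.log ((α - 1) / (α + 1))) :=
              (Real.exp_log hfrac).symm
          _ < Real.exp x := Real.exp_lt_exp.mpr hx.1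
      have hnum : (α - 1) - (α + 1) * Real.exp x < 0 := by
        have := (div_lt_iff₀ (by linarith : (0:ℝ) < α + 1)).mp hgt
        linarith
      exact div_neg_of_neg_of_pos (by nlinarith) (by positivity)
end

section
/- Let α₀ > 0 be the unique positive root of α(exp(α) - 1) = 1 + exp(α). For every α with 1 < α ≤ α₀, one has log((α - 1)/(α + 1)) ≤ -α; consequently f_α(z) = 1 / (1 + exp(z)) + α · exp(z) / (1 + exp(z))² is monotonically decreasing on the feasible margin interval [-α, α], similarly to the loss representation's discriminative power. -/
private lemma aux_g_mono : MonotoneOn (fun x : ℝ => x * (Real.exp x - 1) - (1 + Real.exp x))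
    (Set.Ici 1) := by
  have hderiv : ∀ x : ℝ, HasDerivAt (fun x : ℝ => x * (Real.exp x - 1) - (1 + Real.exp x))
      (1 * (Real.exp x - 1) + x * Real.exp x - Real.exp x) x := by
    intro x
    exact ((hasDerivAt_id x).mul ((Real.hasDerivAt_exp x).sub_const 1)).sub
      ((Real.hasDerivAt_exp x).const_add 1)
  apply monotoneOn_of_deriv_nonneg (convex_Ici 1)
  · exact (Continuous.continuousOn (by continuity))
  · intro x hx; exact (hderiv x).differentiableAt.differentiableWithinAt
  · intro x hx
    rw [interior_Ici] at hx
    rw [(hderiv x).deriv]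
    have h1 : (1:ℝ) < x := hx
    have h2 : (1:ℝ) < Real.exp x := by
      have := Real.add_one_lt_exp (by linarith : x ≠ 0); linarith
    nlinarith

private lemma aux_deriv (α : ℝ) (z : ℝ) :
    HasDerivAt (discPowerBound α)
      (Real.exp z * ((α - 1) - (α + 1) * Real.exp z) / (1 + Real.exp z) ^ 3) z := by
  have hpos : (0:ℝ) < 1 + Real.exp z := by positivity
  have h1 : HasDerivAt (fun z : ℝ => 1 + Real.exp z) (Real.exp z) z :=
    (Real.hasDerivAt_exp z).const_add 1
  have hinv : HasDerivAt (fun z : ℝ => 1 / (1 + Real.exp z))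
      (-(Real.exp z) / (1 + Real.exp z) ^ 2) z := by
    simp only [one_div]; exact h1.inv hpos.ne'
  have hsq : HasDerivAt (fun z : ℝ => (1 + Real.exp z) ^ 2)
      ((2:ℕ) * (1 + Real.exp z) ^ 1 * Real.exp z) z := h1.pow 2
  have hnum : HasDerivAt (fun z : ℝ => α * Real.exp z) (α * Real.exp z) z :=
    (Real.hasDerivAt_exp z).const_mul α
  have hdiv := hnum.div hsq (pow_ne_zero 2 hpos.ne')
  have := hinv.add hdiv
  convert this using 1
  · rfl
  · rfl
  · rfl
  field_simp
  ring

/-- Let `α₀` be the (unique) positive root of `α (exp α - 1) = 1 + exp α`.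
For every `α` with `1 < α ≤ α₀`, the peak `log ((α - 1) / (α + 1))` lies at or
below `-α`, and consequently `f_α` is monotonically decreasing on the feasible
margin interval `[-α, α]`. -/
theorem discPowerBound_decreasing_on_feasible (α₀ : ℝ) (hα₀ : 0 < α₀)
    (hroot : α₀ * (Real.exp α₀ - 1) = 1 + Real.exp α₀)
    (α : ℝ) (h1 : 1 < α) (h2 : α ≤ α₀) :
    Real.log ((α - 1) / (α + 1)) ≤ -α ∧
    AntitoneOn (discPowerBound α) (Set.Icc (-α) α) := by
  have hα1 : (0:ℝ) < α - 1 := by linarith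
  have hα2 : (0:ℝ) < α + 1 := by linarith
  have hg : α * (Real.exp α - 1) - (1 + Real.exp α) ≤ 0 := by
    have := aux_g_mono (Set.mem_Ici.mpr h1.le) (Set.mem_Ici.mpr (by linarith : (1:ℝ) ≤ α₀)) h2
    simp only at this
    linarith [this, hroot]
  have hlog : Real.log ((α - 1) / (α + 1)) ≤ -α := by
    rw [Real.log_le_iff_le_exp (by positivity)]
    rw [div_le_iff₀ hα2, Real.exp_neg]
    rw [inv_mul_eq_div, le_div_iff₀ (Real.exp_pos α)]
    nlinarith [Real.exp_pos α]
  refine ⟨hlog, ?_⟩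
  apply antitoneOn_of_deriv_nonpos (convex_Icc _ _)
  · exact fun x _ => ((aux_deriv α x).continuousAt.continuousWithinAt)
  · exact fun x _ => (aux_deriv α x).differentiableAt.differentiableWithinAt
  · intro x hx
    rw [interior_Icc] at hx
    rw [(aux_deriv α x).deriv]
    apply div_nonpos_of_nonpos_of_nonneg _ (by positivity)
    apply mul_nonpos_of_nonneg_of_nonpos (Real.exp_pos x).le
    have hxgt : Real.log ((α - 1) / (α + 1)) < x := lt_of_le_of_lt hlog hx.1
    have : (α - 1) / (α + 1) < Real.exp x := by
      calc (α - 1) / (α + 1) = Real.exp (Real.log ((α - 1) / (α + 1))) := by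
            rw [Real.exp_log (by positivity)]
        _ < Real.exp x := Real.exp_lt_exp.mpr hxgt
    rw [div_lt_iff₀ hα2] at this
    nlinarith
end
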